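/- Let X be a nonempty set partitioned as the disjoint union of images h_i(X) of injective maps h_i : X → X, i = 1,…,n. Let F be a Banach space, q_i : X → F bounded, and s_i : X → ℝ bounded with max_i sup_x |s_i(x)| < 1. Then there exists a unique bounded function ψ : X → F satisfying the self-referential system ψ(h_i(x)) = q_i(x) + s_i(x)·ψ(x) for all x ∈ X and all i = 1,…,n. -/

import Mathlib

/-- Existence and uniqueness of a bounded solution `ψ` of the
self-referential system `ψ (h i x) = q i x + s i x • ψ x`, where the images of the
injective maps `h i` partition `X`, the `q i` are bounded and `|s i x| ≤ c < 1`.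
Bounded functions are modeled as `BoundedContinuousFunction X F` with `X` discrete. -/
theorem stmt_1 {X : Type*} [TopologicalSpace X] [DiscreteTopology X] [Nonempty X]
    {F : Type*} [NormedAddCommGroup F] [NormedSpace ℝ F] [CompleteSpace F]
    (n : ℕ) (h : Fin n → X → X)
    (hinj : ∀ i, Function.Injective (h i))
    (hcover : ∀ x : X, ∃ i, x ∈ Set.range (h i))
    (hdisj : ∀ i j, i ≠ j → Disjoint (Set.range (h i)) (Set.range (h j)))
    (q : Fin n → BoundedContinuousFunction X F) (s : Fin n → X → ℝ)
    (c : ℝ) (hc1 : c < 1)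
    (hs : ∀ i x, |s i x| ≤ c) :
    ∃! ψ : BoundedContinuousFunction X F, ∀ i x, ψ (h i x) = q i x + s i x • ψ x := by
  classical
  have hc0 : 0 ≤ c := by
    obtain ⟨i, x, -⟩ := hcover (Classical.arbitrary X)
    exact (abs_nonneg _).trans (hs i x)
  simp only [Set.mem_range] at hcover
  choose idx pre hpre using hcover
  -- uniqueness of the decomposition
  have hkey : ∀ i x, idx (h i x) = i ∧ pre (h i x) = x := by
    intro i x
    have h1 : idx (h i x) = i := by
      by_contra hne
      exact Set.disjoint_left.1 (hdisj _ _ hne) ⟨pre (h i x), hpre (h i x)⟩ ⟨x, rfl⟩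
    have h2 := hpre (h i x)
    rw [h1] at h2
    exact ⟨h1, hinj i h2⟩
  -- the Read–Bajraktarević operator
  set T : BoundedContinuousFunction X F → BoundedContinuousFunction X F := fun f =>
    BoundedContinuousFunction.ofNormedAddCommGroup
      (fun y => q (idx y) (pre y) + s (idx y) (pre y) • f (pre y))
      continuous_of_discreteTopology
      ((∑ i, ‖q i‖) + c * ‖f‖)
      (by
        intro y
        refine (norm_add_le _ _).trans (add_le_add ?_ ?_)
        · exact ((q (idx y)).norm_coe_le_norm _).trans
            (Finset.single_le_sum (f := fun i => ‖q i‖)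
              (fun i _ => norm_nonneg _) (Finset.mem_univ _))
        · rw [norm_smul, Real.norm_eq_abs]
          exact mul_le_mul (hs _ _) (f.norm_coe_le_norm _) (norm_nonneg _) hc0)
    with hT
  have hTapp : ∀ f y, T f y = q (idx y) (pre y) + s (idx y) (pre y) • f (pre y) :=
    fun f y => rfl
  have hcontr : ContractingWith ⟨c, hc0⟩ T := by
    constructor
    · exact_mod_cast hc1
    · apply LipschitzWith.of_dist_le_mul
      intro f g
      refine BoundedContinuousFunction.dist_le (by positivity) |>.2 fun y => ?_
      rw [hTapp, hTapp]
      have : dist (q (idx y) (pre y) + s (idx y) (pre y) • f (pre y))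
          (q (idx y) (pre y) + s (idx y) (pre y) • g (pre y))
          = |s (idx y) (pre y)| * dist (f (pre y)) (g (pre y)) := by
        rw [dist_add_left, dist_eq_norm, ← smul_sub, norm_smul, Real.norm_eq_abs,
          ← dist_eq_norm]
      rw [this]
      exact mul_le_mul (hs _ _) (f.dist_coe_le_dist _) dist_nonneg hc0
  -- fixed points are exactly solutions of the system
  have hequiv : ∀ ψ : BoundedContinuousFunction X F,
      Function.IsFixedPt T ψ ↔ ∀ i x, ψ (h i x) = q i x + s i x • ψ x := by
    intro ψ
    constructor
    · intro hfix i x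
      have : T ψ (h i x) = ψ (h i x) := congrFun (congrArg DFunLike.coe hfix) (h i x)
      rw [hTapp] at this
      rw [← this, (hkey i x).1, (hkey i x).2]
    · intro hsys
      ext y
      rw [hTapp, ← hpre y, (hkey _ _).1, (hkey _ _).2, hsys]
  refine ⟨hcontr.fixedPoint T, (hequiv _).1 hcontr.fixedPoint_isFixedPt,
    fun ψ hψ => hcontr.fixedPoint_unique ((hequiv ψ).2 hψ)⟩
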